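/- Let r_1 < r_2 be positive integers and α ≥ 1 an integer. Let C be a linear [n,k,d]_q code with k > α(r_2 − r_1) in which every coordinate has locality r_2, and suppose there exist α pairwise disjoint sets R_1,…,R_α ⊆ {1,…,n}, each of size r_2 + 1, such that for each i there are coefficients λ_j ∈ F_q\{0} (j ∈ R_i) with Σ_{j∈R_i} λ_j c_j = 0 for every c ∈ C. Then there exists a linear code C' over F_q of length n − α(r_2 − r_1), dimension at least k − α(r_2 − r_1), and minimum Hamming distance at least d, whose coordinates admit a partition into a set of α(r_1+1) coordinates each having locality r_1 and a set of n − α(r_2+1) coordinates each having locality r_2. Moreover, if k = t'·r_2 + k_opt^{(q)}(n − t'(r_2+1), d) for some integer t' ≥ α and dim C' = k − α(r_2 − r_1), then dim C' = α r_1 + (t'−α) r_2 + k_opt^{(q)}((n − α(r_2−r_1)) − α(r_1+1) − (t'−α)(r_2+1), d). -/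

import Mathlib

open Finset

/-- `C` is a linear `[n,k,d]_q` code over `F`: it has `F`-dimension `k` and its minimum
Hamming distance (least Hamming weight of a nonzero codeword) equals `d`. -/
def IsLinearCode (F : Type*) [Field F] [DecidableEq F] {n : ℕ}
    (C : Submodule F (Fin n → F)) (k d : ℕ) : Prop :=
  Module.finrank F C = k ∧
    (∀ c ∈ C, c ≠ 0 → d ≤ hammingNorm c) ∧
    ∃ c ∈ C, c ≠ 0 ∧ hammingNorm c = d

/-- Coordinate `i` of the code `C` has locality `r`. -/
def HasLocality (F : Type*) [Field F] {n : ℕ} (C : Submodule F (Fin n → F))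
    (i : Fin n) (r : ℕ) : Prop :=
  ∃ R : Finset (Fin n), i ∉ R ∧ R.card ≤ r ∧
    ∃ lam : Fin n → F, ∀ c ∈ C, c i = ∑ j ∈ R, lam j * c j

/-- Coordinate `i` of the code `C` has locality `r` with a repair set contained in `S`. -/
def HasLocalityIn (F : Type*) [Field F] {n : ℕ} (C : Submodule F (Fin n → F))
    (i : Fin n) (r : ℕ) (S : Finset (Fin n)) : Prop :=
  ∃ R : Finset (Fin n), R ⊆ S ∧ i ∉ R ∧ R.card ≤ r ∧
    ∃ lam : Fin n → F, ∀ c ∈ C, c i = ∑ j ∈ R, lam j * c j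

/-- `H(I)`: the `F`-dimension of the image of `C` under the coordinate projection onto `I`. -/
noncomputable def projDim (F : Type*) [Field F] {n : ℕ}
    (C : Submodule F (Fin n → F)) (I : Finset (Fin n)) : ℕ :=
  Module.finrank F (C.map (LinearMap.funLeft F F (fun i : {x // x ∈ I} => (i : Fin n))))

/-- `k_opt^{(q)}(n,d)`: the largest dimension of a linear code of length `n` over `F`
with minimum Hamming distance at least `d`. -/
noncomputable def kopt (F : Type*) [Field F] [DecidableEq F] (n d : ℕ) : ℕ :=
  sSup {k | ∃ C : Submodule F (Fin n → F), Module.finrank F C = k ∧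
    ∀ c ∈ C, c ≠ 0 → d ≤ hammingNorm c}

theorem stmt15 {F : Type*} [Field F] [Fintype F] [DecidableEq F] {n k d r₁ r₂ α : ℕ}
    (hr₁ : 0 < r₁) (hr : r₁ < r₂) (hα : 1 ≤ α) (hk : α * (r₂ - r₁) < k)
    (C : Submodule F (Fin n → F)) (hC : IsLinearCode F C k d)
    (hloc : ∀ i : Fin n, HasLocality F C i r₂)
    (Rs : ℕ → Finset (Fin n))
    (hRdisj : ∀ i j, i < j → j < α → Disjoint (Rs i) (Rs j))
    (hRcard : ∀ i < α, (Rs i).card = r₂ + 1)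
    (hRzero : ∀ i < α, ∃ lam : Fin n → F, (∀ j ∈ Rs i, lam j ≠ 0) ∧
      ∀ c ∈ C, ∑ j ∈ Rs i, lam j * c j = 0) :
    ∃ C' : Submodule F (Fin (n - α * (r₂ - r₁)) → F),
      (k - α * (r₂ - r₁) ≤ Module.finrank F C') ∧
      (∀ c ∈ C', c ≠ 0 → d ≤ hammingNorm c) ∧
      (∃ A B : Finset (Fin (n - α * (r₂ - r₁))), Disjoint A B ∧ A ∪ B = Finset.univ ∧
        A.card = α * (r₁ + 1) ∧ B.card = n - α * (r₂ + 1) ∧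
        (∀ x ∈ A, HasLocality F C' x r₁) ∧
        (∀ x ∈ B, HasLocality F C' x r₂)) ∧
      (∀ t' : ℕ, α ≤ t' → k = t' * r₂ + kopt F (n - t' * (r₂ + 1)) d →
        Module.finrank F C' = k - α * (r₂ - r₁) →
        Module.finrank F C' = α * r₁ + (t' - α) * r₂ +
          kopt F ((n - α * (r₂ - r₁)) - α * (r₁ + 1) - (t' - α) * (r₂ + 1)) d) := by
  classical
  have hdisj : ∀ i j, i < α → j < α → i ≠ j → Disjoint (Rs i) (Rs j) := by
    intro i j hi hj hij
    rcases lt_or_gt_of_ne hij with h | h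
    · exact hRdisj i j h hj
    · exact (hRdisj j i h hi).symm
  -- choose deleted sets T i ⊆ Rs i of size r₂ - r₁
  have hT : ∀ i, ∃ t : Finset (Fin n), t ⊆ Rs i ∧ (i < α → t.card = r₂ - r₁) := by
    intro i
    by_cases hi : i < α
    · obtain ⟨t, ht, htc⟩ := Finset.exists_subset_card_eq
        (s := Rs i) (n := r₂ - r₁) (by rw [hRcard i hi]; omega)
      exact ⟨t, ht, fun _ => htc⟩
    · exact ⟨∅, Finset.empty_subset _, fun h => absurd h hi⟩
  choose T hTsub hTcard using hT
  set S : ℕ → Finset (Fin n) := fun i => Rs i \ T i with hSdef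
  have hScard : ∀ i < α, (S i).card = r₁ + 1 := by
    intro i hi
    rw [hSdef]
    simp only [Finset.card_sdiff_of_subset (hTsub i)]
    rw [hRcard i hi, hTcard i hi]; omega
  set D : Finset (Fin n) := (Finset.range α).biUnion T with hDdef
  have hTdisj : ∀ x ∈ Finset.range α, ∀ y ∈ Finset.range α, x ≠ y → Disjoint (T x) (T y) := by
    intro x hx y hy hxy
    exact Finset.disjoint_of_subset_left (hTsub x) (Finset.disjoint_of_subset_right (hTsub y)
      (hdisj x y (Finset.mem_range.1 hx) (Finset.mem_range.1 hy) hxy))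
  have hDcard : D.card = α * (r₂ - r₁) := by
    rw [hDdef, Finset.card_biUnion hTdisj]
    rw [Finset.sum_congr rfl fun i hi => hTcard i (Finset.mem_range.1 hi)]
    simp [mul_comm]
  set U : Finset (Fin n) := (Finset.range α).biUnion S with hUdef
  have hSsub : ∀ i, S i ⊆ Rs i := fun i => Finset.sdiff_subset
  have hSdisjT : ∀ i j, i < α → j < α → Disjoint (S i) (T j) := by
    intro i j hi hj
    by_cases hij : i = j
    · subst hij; exact Finset.sdiff_disjoint
    · exact Finset.disjoint_of_subset_left (hSsub i)
        (Finset.disjoint_of_subset_right (hTsub j) (hdisj i j hi hj hij))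
  have hUD : Disjoint U D := by
    rw [hUdef, hDdef, Finset.disjoint_biUnion_left]
    intro i hi
    rw [Finset.disjoint_biUnion_right]
    intro j hj
    exact hSdisjT i j (Finset.mem_range.1 hi) (Finset.mem_range.1 hj)
  have hUcard : U.card = α * (r₁ + 1) := by
    rw [hUdef, Finset.card_biUnion]
    · rw [Finset.sum_congr rfl fun i hi => hScard i (Finset.mem_range.1 hi)]
      simp [mul_comm]
    · intro x hx y hy hxy
      exact Finset.disjoint_of_subset_left (hSsub x) (Finset.disjoint_of_subset_right (hSsub y)
        (hdisj x y (Finset.mem_range.1 hx) (Finset.mem_range.1 hy) hxy))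
  -- the kept coordinates
  set K : Finset (Fin n) := Dᶜ with hKdef
  have hKcard : K.card = n - α * (r₂ - r₁) := by
    rw [hKdef, Finset.card_compl, hDcard, Fintype.card_fin]
  set emb : Fin (n - α * (r₂ - r₁)) ↪o Fin n := K.orderEmbOfFin hKcard with hembdef
  have hembinj : Function.Injective emb := emb.injective
  have hembK : ∀ y, (emb y : Fin n) ∈ K := fun y => Finset.orderEmbOfFin_mem K hKcard y
  have hembD : ∀ y, (emb y : Fin n) ∉ D := fun y => Finset.mem_compl.1 (hembK y)
  have hsurjK : ∀ j : Fin n, j ∉ D → ∃ y, emb y = j := by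
    intro j hj
    have : j ∈ Set.range emb := by
      rw [Finset.range_orderEmbOfFin]
      exact Finset.mem_coe.2 (Finset.mem_compl.2 hj)
    exact this
  -- the shortening submodule
  set Z : Submodule F (Fin n → F) :=
    { carrier := {c | ∀ j ∈ D, c j = 0}
      add_mem' := by intro a b ha hb j hj; simp only [Pi.add_apply, ha j hj, hb j hj, add_zero]
      zero_mem' := fun j hj => rfl
      smul_mem' := by intro a x hx j hj; simp only [Pi.smul_apply, hx j hj, smul_zero] } with hZdef
  have hZmem : ∀ c : Fin n → F, c ∈ Z ↔ ∀ j ∈ D, c j = 0 := fun c => Iff.rfl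
  set P : (Fin n → F) →ₗ[F] (Fin (n - α * (r₂ - r₁)) → F) :=
    LinearMap.funLeft F F (fun y => (emb y : Fin n)) with hPdef
  have hPapp : ∀ (c : Fin n → F) (y), P c y = c (emb y) := fun c y => rfl
  set C' : Submodule F (Fin (n - α * (r₂ - r₁)) → F) := (C ⊓ Z).map P with hC'def
  -- injectivity of P on C ⊓ Z
  have hPinj : ∀ c ∈ C ⊓ Z, P c = 0 → c = 0 := by
    intro c hc hPc
    funext j
    by_cases hj : j ∈ D
    · exact hc.2 j hj
    · obtain ⟨y, rfl⟩ := hsurjK j hj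
      have := congrFun hPc y
      simpa [hPapp] using this
  -- dimension equality between C ⊓ Z and C'
  have hrankeq : Module.finrank F C' = Module.finrank F (C ⊓ Z : Submodule F (Fin n → F)) := by
    have hinj : Function.Injective (P.comp (C ⊓ Z).subtype) := by
      rw [← LinearMap.ker_eq_bot, LinearMap.ker_eq_bot']
      intro m hm
      have : (m : Fin n → F) = 0 := hPinj m m.2 hm
      exact Subtype.ext this
    have hrange : LinearMap.range (P.comp (C ⊓ Z).subtype) = C' := by
      rw [LinearMap.range_comp, Submodule.range_subtype, hC'def]
    rw [← hrange]
    exact LinearMap.finrank_range_of_inj hinj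
  -- lower bound on dimension of C ⊓ Z
  have hrankCZ : k - α * (r₂ - r₁) ≤ Module.finrank F (C ⊓ Z : Submodule F (Fin n → F)) := by
    set q : C →ₗ[F] ({x // x ∈ D} → F) :=
      (LinearMap.funLeft F F (fun j : {x // x ∈ D} => (j : Fin n))).comp C.subtype with hqdef
    have hker : LinearMap.ker q = Submodule.comap C.subtype (C ⊓ Z) := by
      ext ⟨c, hc⟩
      simp only [LinearMap.mem_ker, Submodule.mem_comap, Submodule.coe_subtype,
        Submodule.mem_inf, hqdef, LinearMap.comp_apply, hZmem]
      constructor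
      · intro h
        exact ⟨hc, fun j hj => congrFun h ⟨j, hj⟩⟩
      · intro h
        funext j
        exact h.2 j j.2
    have h1 : Module.finrank F (LinearMap.ker q) =
        Module.finrank F (C ⊓ Z : Submodule F (Fin n → F)) := by
      rw [hker]
      exact (Submodule.comapSubtypeEquivOfLe inf_le_left).finrank_eq
    have h2 := LinearMap.finrank_range_add_finrank_ker q
    have h3 : Module.finrank F (LinearMap.range q) ≤ α * (r₂ - r₁) := by
      calc Module.finrank F (LinearMap.range q) ≤ Module.finrank F ({x // x ∈ D} → F) :=
            Submodule.finrank_le _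
        _ = D.card := by rw [Module.finrank_fintype_fun_eq_card, Fintype.card_coe]
        _ = α * (r₂ - r₁) := hDcard
    have h4 : Module.finrank F C = k := hC.1
    omega
  -- Hamming norm preservation for shortened words
  have hnorm : ∀ c ∈ Z, hammingNorm (P c) = hammingNorm c := by
    intro c hc
    classical
    have : (Finset.univ.filter fun y => P c y ≠ 0).card =
        (Finset.univ.filter fun j => c j ≠ 0).card := by
      apply Finset.card_bij (fun y _ => (emb y : Fin n))
      · intro y hy
        simp only [Finset.mem_filter, Finset.mem_univ, true_and] at hy ⊢
        rw [hPapp] at hy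
        exact hy
      · intro a ha b hb hab
        exact hembinj hab
      · intro j hj
        simp only [Finset.mem_filter, Finset.mem_univ, true_and] at hj
        have hjD : j ∉ D := fun hjD => hj (hc j hjD)
        obtain ⟨y, rfl⟩ := hsurjK j hjD
        exact ⟨y, by simp only [Finset.mem_filter, Finset.mem_univ, true_and, hPapp]; exact hj, rfl⟩
    exact this
  refine ⟨C', ?_, ?_, ?_, ?_⟩
  · rw [hrankeq]; exact hrankCZ
  · -- minimum distance
    rintro c' hc' hc'ne
    obtain ⟨c, hc, rfl⟩ := hc'
    have hcne : c ≠ 0 := by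
      rintro rfl
      exact hc'ne (map_zero P)
    rw [hnorm c hc.2]
    exact hC.2.1 c hc.1 hcne
  · -- partition and localities
    set A : Finset (Fin (n - α * (r₂ - r₁))) :=
      Finset.univ.filter (fun x => (emb x : Fin n) ∈ U) with hAdef
    have himgA : Finset.image (fun x => (emb x : Fin n)) A = U := by
      ext j
      simp only [Finset.mem_image, hAdef, Finset.mem_filter, Finset.mem_univ, true_and]
      constructor
      · rintro ⟨x, hx, rfl⟩; exact hx
      · intro hj
        have hjD : j ∉ D := Finset.disjoint_left.1 hUD hj
        obtain ⟨y, rfl⟩ := hsurjK j hjD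
        exact ⟨y, hj, rfl⟩
    have hAcard : A.card = α * (r₁ + 1) := by
      rw [← hUcard, ← himgA, Finset.card_image_of_injective _ hembinj]
    refine ⟨A, Aᶜ, disjoint_compl_right, Finset.union_compl A, hAcard, ?_, ?_, ?_⟩
    · rw [Finset.card_compl, hAcard, Fintype.card_fin]
      have e1 : α * (r₂ - r₁) + α * (r₁ + 1) = α * (r₂ + 1) := by
        rw [← Nat.mul_add]; congr 1; omega
      omega
    · -- locality r₁ on A
      intro x hx
      rw [hAdef, Finset.mem_filter] at hx
      obtain ⟨-, hxU⟩ := hx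
      rw [hUdef, Finset.mem_biUnion] at hxU
      obtain ⟨i, hi, hxS⟩ := hxU
      have hiα : i < α := Finset.mem_range.1 hi
      obtain ⟨lam, hlamne, hlam0⟩ := hRzero i hiα
      set L : F := lam (emb x) with hLdef
      have hLne : L ≠ 0 := hlamne _ (hSsub i hxS)
      refine ⟨Finset.univ.filter (fun y => (emb y : Fin n) ∈ S i ∧ y ≠ x), ?_, ?_,
        fun y => -(lam (emb y)) / L, ?_⟩
      · simp
      · have himg : Finset.image (fun y => (emb y : Fin n))
            (Finset.univ.filter (fun y => (emb y : Fin n) ∈ S i ∧ y ≠ x)) =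
            (S i).erase (emb x) := by
          ext j
          simp only [Finset.mem_image, Finset.mem_filter, Finset.mem_univ, true_and,
            Finset.mem_erase]
          constructor
          · rintro ⟨y, ⟨hyS, hyx⟩, rfl⟩
            exact ⟨fun h => hyx (hembinj h), hyS⟩
          · rintro ⟨hje, hjS⟩
            have hjD : j ∉ D := by
              intro hjD
              rw [hDdef, Finset.mem_biUnion] at hjD
              obtain ⟨i', hi', hjT⟩ := hjD
              exact Finset.disjoint_left.1 (hSdisjT i i' hiα (Finset.mem_range.1 hi')) hjS hjT
            obtain ⟨y, rfl⟩ := hsurjK j hjD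
            exact ⟨y, ⟨hjS, fun h => hje (congrArg _ h)⟩, rfl⟩
        rw [← Finset.card_image_of_injective _ hembinj, himg,
          Finset.card_erase_of_mem hxS, hScard i hiα]
        omega
      · rintro c' ⟨c, hc, rfl⟩
        simp only [hPapp]
        -- sum over S i vanishes
        have hTD : T i ⊆ D := by
          intro j hj
          rw [hDdef, Finset.mem_biUnion]
          exact ⟨i, hi, hj⟩
        have hsplit : ∑ j ∈ Rs i, lam j * c j = ∑ j ∈ S i, lam j * c j := by
          symm
          apply Finset.sum_subset (hSsub i)
          intro j hjR hjS
          have hjT : j ∈ T i := by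
            rw [hSdef] at hjS
            simp only [Finset.mem_sdiff, hjR, true_and, not_not] at hjS
            exact hjS
          rw [hc.2 j (hTD hjT), mul_zero]
        have hS0 : ∑ j ∈ S i, lam j * c j = 0 := by
          rw [← hsplit]; exact hlam0 c hc.1
        have herase : ∑ j ∈ (S i).erase (emb x), lam j * c j = -(L * c (emb x)) := by
          have h := Finset.add_sum_erase (S i) (fun j => lam j * c j) hxS
          rw [hS0] at h
          have : ∑ x_1 ∈ (S i).erase (emb x), lam x_1 * c x_1 = -(lam (emb x) * c (emb x)) :=
            eq_neg_of_add_eq_zero_right h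
          rw [this, hLdef]
        have himg : Finset.image (fun y => (emb y : Fin n))
            (Finset.univ.filter (fun y => (emb y : Fin n) ∈ S i ∧ y ≠ x)) =
            (S i).erase (emb x) := by
          ext j
          simp only [Finset.mem_image, Finset.mem_filter, Finset.mem_univ, true_and,
            Finset.mem_erase]
          constructor
          · rintro ⟨y, ⟨hyS, hyx⟩, rfl⟩
            exact ⟨fun h => hyx (hembinj h), hyS⟩
          · rintro ⟨hje, hjS⟩
            have hjD : j ∉ D := by
              intro hjD
              rw [hDdef, Finset.mem_biUnion] at hjD
              obtain ⟨i', hi', hjT⟩ := hjD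
              exact Finset.disjoint_left.1 (hSdisjT i i' hiα (Finset.mem_range.1 hi')) hjS hjT
            obtain ⟨y, rfl⟩ := hsurjK j hjD
            exact ⟨y, ⟨hjS, fun h => hje (congrArg _ h)⟩, rfl⟩
        have hsum : ∑ y ∈ Finset.univ.filter (fun y => (emb y : Fin n) ∈ S i ∧ y ≠ x),
            -(lam (emb y)) / L * c (emb y) =
            ∑ j ∈ (S i).erase (emb x), -(lam j) / L * c j := by
          rw [← himg]
          rw [Finset.sum_image (fun a _ b _ h => hembinj h)]
        rw [hsum]
        have : ∑ j ∈ (S i).erase (emb x), -(lam j) / L * c j =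
            (∑ j ∈ (S i).erase (emb x), lam j * c j) * (-1 / L) := by
          rw [Finset.sum_mul]
          apply Finset.sum_congr rfl
          intro j hj
          ring
        rw [this, herase]
        field_simp
    · -- locality r₂ on B
      intro x hx
      obtain ⟨R, hiR, hRc, lam, hlam⟩ := hloc (emb x)
      refine ⟨Finset.univ.filter (fun y => (emb y : Fin n) ∈ R), ?_, ?_,
        fun y => lam (emb y), ?_⟩
      · simp [hiR]
      · have himg : Finset.image (fun y => (emb y : Fin n))
            (Finset.univ.filter (fun y => (emb y : Fin n) ∈ R)) = R \ D := by
          ext j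
          simp only [Finset.mem_image, Finset.mem_filter, Finset.mem_univ, true_and,
            Finset.mem_sdiff]
          constructor
          · rintro ⟨y, hyR, rfl⟩
            exact ⟨hyR, hembD y⟩
          · rintro ⟨hjR, hjD⟩
            obtain ⟨y, rfl⟩ := hsurjK j hjD
            exact ⟨y, hjR, rfl⟩
        rw [← Finset.card_image_of_injective _ hembinj, himg]
        exact le_trans (Finset.card_le_card Finset.sdiff_subset) hRc
      · rintro c' ⟨c, hc, rfl⟩
        simp only [hPapp]
        have h1 : c (emb x) = ∑ j ∈ R, lam j * c j := hlam c hc.1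
        have h2 : ∑ j ∈ R \ D, lam j * c j = ∑ j ∈ R, lam j * c j := by
          apply Finset.sum_subset Finset.sdiff_subset
          intro j hjR hjRD
          have hjD : j ∈ D := by
            simp only [Finset.mem_sdiff, hjR, true_and, not_not] at hjRD
            exact hjRD
          rw [hc.2 j hjD, mul_zero]
        have himg : Finset.image (fun y => (emb y : Fin n))
            (Finset.univ.filter (fun y => (emb y : Fin n) ∈ R)) = R \ D := by
          ext j
          simp only [Finset.mem_image, Finset.mem_filter, Finset.mem_univ, true_and,
            Finset.mem_sdiff]
          constructor
          · rintro ⟨y, hyR, rfl⟩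
            exact ⟨hyR, hembD y⟩
          · rintro ⟨hjR, hjD⟩
            obtain ⟨y, rfl⟩ := hsurjK j hjD
            exact ⟨y, hjR, rfl⟩
        have h3 : ∑ y ∈ Finset.univ.filter (fun y => (emb y : Fin n) ∈ R),
            lam (emb y) * c (emb y) = ∑ j ∈ R \ D, lam j * c j := by
          rw [← himg, Finset.sum_image (fun a _ b _ h => hembinj h)]
        rw [h3, h2, h1]
  · -- the k_opt statement
    intro t' ht' hkeq hdim
    have hsub : (n - α * (r₂ - r₁)) - α * (r₁ + 1) - (t' - α) * (r₂ + 1) = n - t' * (r₂ + 1) := by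
      have e1 : α * (r₂ - r₁) + α * (r₁ + 1) = α * (r₂ + 1) := by
        rw [← Nat.mul_add]
        congr 1
        omega
      have e2 : α * (r₂ + 1) + (t' - α) * (r₂ + 1) = t' * (r₂ + 1) := by
        rw [← Nat.add_mul]
        congr 1
        omega
      omega
    rw [hdim, hsub, hkeq]
    have e3 : α * r₁ + (t' - α) * r₂ + α * (r₂ - r₁) = t' * r₂ := by
      have : α * r₁ + α * (r₂ - r₁) = α * r₂ := by rw [← Nat.mul_add]; congr 1; omega
      have : α * r₂ + (t' - α) * r₂ = t' * r₂ := by rw [← Nat.add_mul]; congr 1; omega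
      omega
    omega
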